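/- (Theorem 4.2.) Let x̄ be an isolated local minimizer of problem (P), let X be closed, let f be Lipschitz with constant L on N_δ(x̄) ∩ X for some δ > 0, let the functions g_i (i = 1,…,m) be lower semicontinuous, let the functions h_j (j = 1,…,q) be Hadamard differentiable on X and lower semicontinuous, and suppose there exists a > 0 with d(x) ≤ −a for all x ∈ N_δ(x̄) \ S. Then there exists an integer s such that x̄ is an isolated local minimizer of x ↦ F(x,γ) over G for every γ > s; i.e., for every γ > s there exist A > 0 and a neighborhood N of x̄ with F(x,γ) ≥ F(x̄,γ) + A‖x − x̄‖ for all x ∈ G ∩ N. -/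

import Mathlib

open Filter Topology

noncomputable section

/-- The lower Hadamard directional derivative of `f` at `x` in direction `u` with respect to
the set `S`, as an extended real number.  It is the `liminf` of the difference quotients
`(f (x + t • u') - f x) / t` as `(t, u') → (0⁺, u)` subject to `x + t • u' ∈ S`.
When `u` is not in the Bouligand tangent cone of `S` at `x` the restricting filter is the
bottom filter, and the `liminf` is `+∞`, in accordance with the convention
`∂⁻f(x;u;S) = +∞` for `u ∉ T(S,x)`. -/
def lowerHadamardDeriv {l : ℕ} (f : EuclideanSpace ℝ (Fin l) → ℝ) (S : Set (EuclideanSpace ℝ (Fin l)))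
    (x u : EuclideanSpace ℝ (Fin l)) : EReal :=
  Filter.liminf
    (fun p : ℝ × EuclideanSpace ℝ (Fin l) => (((f (x + p.1 • p.2) - f x) / p.1 : ℝ) : EReal))
    ((nhdsWithin (0 : ℝ) (Set.Ioi 0) ×ˢ nhds u) ⊓
      Filter.principal {p : ℝ × EuclideanSpace ℝ (Fin l) | x + p.1 • p.2 ∈ S})

/-- `f` is Hadamard differentiable at `x` in direction `u` with respect to `S`, with
(extended real) derivative `d`: the full limit of the difference quotients
`(f (x + t • u') - f x) / t` as `(t, u') → (0⁺, u)` subject to `x + t • u' ∈ S` exists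
and equals `d`. -/
def HasHadamardDerivAt {l : ℕ} (f : EuclideanSpace ℝ (Fin l) → ℝ) (S : Set (EuclideanSpace ℝ (Fin l)))
    (x u : EuclideanSpace ℝ (Fin l)) (d : EReal) : Prop :=
  Filter.Tendsto
    (fun p : ℝ × EuclideanSpace ℝ (Fin l) => (((f (x + p.1 • p.2) - f x) / p.1 : ℝ) : EReal))
    ((nhdsWithin (0 : ℝ) (Set.Ioi 0) ×ˢ nhds u) ⊓
      Filter.principal {p : ℝ × EuclideanSpace ℝ (Fin l) | x + p.1 • p.2 ∈ S})
    (nhds d)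

/-- The Bouligand tangent cone (contingent cone) of `S` at `x`. -/
def bouligandCone {l : ℕ} (S : Set (EuclideanSpace ℝ (Fin l))) (x : EuclideanSpace ℝ (Fin l)) : Set (EuclideanSpace ℝ (Fin l)) :=
  {u | ∃ (t : ℕ → ℝ) (v : ℕ → EuclideanSpace ℝ (Fin l)),
    (∀ k, 0 < t k) ∧ Filter.Tendsto t Filter.atTop (nhds 0) ∧
    Filter.Tendsto v Filter.atTop (nhds u) ∧ ∀ k, x + t k • v k ∈ S}

/-- `h := h₁² + ⋯ + h_q²`. -/
def hsum {l q : ℕ} (hf : Fin q → EuclideanSpace ℝ (Fin l) → ℝ) (x : EuclideanSpace ℝ (Fin l)) : ℝ :=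
  ∑ j, (hf j x) ^ 2

/-- `G := {x ∈ X : gᵢ(x) ≤ 0, i = 1,…,m}`. -/
def Gset {l m : ℕ} (X : Set (EuclideanSpace ℝ (Fin l))) (g : Fin m → EuclideanSpace ℝ (Fin l) → ℝ) : Set (EuclideanSpace ℝ (Fin l)) :=
  {x ∈ X | ∀ i, g i x ≤ 0}

/-- The feasible set `S := {x ∈ G : h(x) = 0}` of problem (P). -/
def Sset {l m q : ℕ} (X : Set (EuclideanSpace ℝ (Fin l))) (g : Fin m → EuclideanSpace ℝ (Fin l) → ℝ)
    (hf : Fin q → EuclideanSpace ℝ (Fin l) → ℝ) : Set (EuclideanSpace ℝ (Fin l)) :=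
  {x ∈ Gset X g | hsum hf x = 0}

/-- The penalty function `F(x,γ) := f(x) + γ h(x) + ½‖x - xbar‖²`. -/
def Fpen {l q : ℕ} (f : EuclideanSpace ℝ (Fin l) → ℝ) (hf : Fin q → EuclideanSpace ℝ (Fin l) → ℝ)
    (xbar : EuclideanSpace ℝ (Fin l)) (γ : ℝ) (x : EuclideanSpace ℝ (Fin l)) : ℝ :=
  f x + γ * hsum hf x + (1 / 2) * ‖x - xbar‖ ^ 2

/-- `d(x) := inf {∂⁻h(x;u;X) : u ∈ T(G,x), ‖u‖ = 1}` (an infimum in the extended reals). -/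
def dFun {l m q : ℕ} (hf : Fin q → EuclideanSpace ℝ (Fin l) → ℝ) (X : Set (EuclideanSpace ℝ (Fin l)))
    (g : Fin m → EuclideanSpace ℝ (Fin l) → ℝ) (x : EuclideanSpace ℝ (Fin l)) : EReal :=
  sInf {r : EReal | ∃ u ∈ bouligandCone (Gset X g) x, ‖u‖ = 1 ∧
    lowerHadamardDeriv (hsum hf) X x u = r}

/-- Theorem 4.2: under the hypotheses of Theorem 2.1, if moreover `xbar` is an isolated local
minimizer of (P), then `xbar` is an isolated local minimizer of `F(·,γ)` over `G` for every
`γ > s`, for some integer `s`. -/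
theorem hadamard_continuousAt {l : ℕ} {f : EuclideanSpace ℝ (Fin l) → ℝ}
    {X : Set (EuclideanSpace ℝ (Fin l))} {x : EuclideanSpace ℝ (Fin l)}
    (hXx : X ∈ 𝓝 x) (hdiff : ∀ u, ∃ d : EReal, HasHadamardDerivAt f X x u d) :
    ContinuousAt f x := by
  obtain ⟨d, hd⟩ := hdiff 0
  set F := ((nhdsWithin (0 : ℝ) (Set.Ioi 0) ×ˢ nhds (0 : EuclideanSpace ℝ (Fin l))) ⊓
      Filter.principal {p : ℝ × EuclideanSpace ℝ (Fin l) | x + p.1 • p.2 ∈ X}) with hF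
  -- first: d = 0
  have hψ : Tendsto (fun t : ℝ => (t, (0 : EuclideanSpace ℝ (Fin l)))) (𝓝[>] (0:ℝ)) F := by
    rw [hF]
    refine tendsto_inf.2 ⟨Tendsto.prodMk ?_ tendsto_const_nhds,
      Filter.tendsto_principal.2 (Eventually.of_forall fun t => ?_)⟩
    · exact tendsto_id
    · simpa using mem_of_mem_nhds hXx
  have hd0 : Tendsto (fun _ : ℝ => ((0:ℝ) : EReal)) (𝓝[>] (0:ℝ)) (𝓝 d) := by
    have := hd.comp hψ
    refine this.congr fun t => ?_
    simp
  have hdeq : d = ((0:ℝ) : EReal) := tendsto_nhds_unique hd0 tendsto_const_nhds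
  rw [hdeq] at hd
  -- now continuity
  rw [ContinuousAt, ← nhdsNE_sup_pure x, Filter.tendsto_sup]
  refine ⟨?_, tendsto_pure_nhds f x⟩
  set φ : EuclideanSpace ℝ (Fin l) → ℝ × EuclideanSpace ℝ (Fin l) :=
    fun y => (Real.sqrt ‖y - x‖, (Real.sqrt ‖y - x‖)⁻¹ • (y - x)) with hφ
  have hsq : ∀ y : EuclideanSpace ℝ (Fin l), y ≠ x → 0 < Real.sqrt ‖y - x‖ := by
    intro y hy
    exact Real.sqrt_pos.2 (norm_pos_iff.2 (sub_ne_zero.2 hy))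
  have heval : ∀ᶠ y in 𝓝[≠] x, x + (φ y).1 • (φ y).2 = y := by
    filter_upwards [self_mem_nhdsWithin] with y hy
    have ht := (hsq y hy).ne'
    simp only [hφ, smul_smul, mul_inv_cancel₀ ht, one_smul]
    abel
  have hsqt : Tendsto (fun y : EuclideanSpace ℝ (Fin l) => Real.sqrt ‖y - x‖) (𝓝 x) (𝓝 0) := by
    have h1 : Tendsto (fun y : EuclideanSpace ℝ (Fin l) => ‖y - x‖) (𝓝 x) (𝓝 0) :=
      tendsto_norm_sub_self x
    have h2 := (Real.continuous_sqrt.tendsto 0).comp h1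
    rwa [Real.sqrt_zero] at h2
  have hφt : Tendsto φ (𝓝[≠] x) F := by
    rw [hF]
    refine tendsto_inf.2 ⟨Tendsto.prodMk ?_ ?_, Filter.tendsto_principal.2 ?_⟩
    · apply tendsto_nhdsWithin_iff.2
      refine ⟨hsqt.mono_left nhdsWithin_le_nhds, ?_⟩
      filter_upwards [self_mem_nhdsWithin] with y hy
      exact hsq y hy
    · apply tendsto_zero_iff_norm_tendsto_zero.2
      refine squeeze_zero_norm' (a := fun y => Real.sqrt ‖y - x‖) ?_ (hsqt.mono_left nhdsWithin_le_nhds)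
      · filter_upwards [self_mem_nhdsWithin] with y hy
        have ht := hsq y hy
        have : ‖(Real.sqrt ‖y - x‖)⁻¹ • (y - x)‖ = (Real.sqrt ‖y - x‖)⁻¹ * ‖y - x‖ := by
          rw [norm_smul, Real.norm_eq_abs, abs_of_pos (inv_pos.2 ht)]
        rw [Real.norm_eq_abs, abs_of_nonneg (norm_nonneg _), this,
          inv_mul_le_iff₀ ht, Real.mul_self_sqrt (norm_nonneg (y - x))]
    · filter_upwards [heval, nhdsWithin_le_nhds hXx] with y h1 h2
      rw [h1]; exact h2
  have hq : Tendsto (fun y => ((f y - f x) / Real.sqrt ‖y - x‖ : ℝ)) (𝓝[≠] x) (𝓝 0) := by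
    rw [← EReal.tendsto_coe]
    have := hd.comp hφt
    refine Tendsto.congr' ?_ this
    filter_upwards [heval] with y h1
    simp only [Function.comp_apply, hφ]
    rw [show x + (φ y).1 • (φ y).2 = y from h1]
  have hsub : Tendsto (fun y => f y - f x) (𝓝[≠] x) (𝓝 0) := by
    have := hq.mul (hsqt.mono_left nhdsWithin_le_nhds)
    rw [zero_mul] at this
    refine this.congr' ?_
    filter_upwards [self_mem_nhdsWithin] with y hy
    exact div_mul_cancel₀ _ (hsq y hy).ne'
  have := hsub.add (tendsto_const_nhds (x := f x))
  rw [zero_add] at this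
  exact this.congr fun y => by ring

theorem my_ekeland {E : Type*} [MetricSpace E] [CompleteSpace E]
    {s : Set E} (hs : IsClosed s) {h : E → ℝ} (hc : ContinuousOn h s)
    (hnn : ∀ y ∈ s, 0 ≤ h y) {x₀ : E} (hx₀ : x₀ ∈ s) {ε : ℝ} (hε : 0 < ε) :
    ∃ xh ∈ s, h xh + ε * dist x₀ xh ≤ h x₀ ∧ ∀ y ∈ s, h xh ≤ h y + ε * dist xh y := by
  classical
  set T : E → Set E := fun z => {y ∈ s | h y + ε * dist z y ≤ h z} with hT
  have hself : ∀ z ∈ s, z ∈ T z := by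
    intro z hz; refine ⟨hz, by simp⟩
  have hstep : ∀ (n : ℕ) (z : s), ∃ z' : s, (z' : E) ∈ T z ∧
      h z' ≤ sInf (h '' T z) + (1/2)^n := by
    intro n z
    have hne : (h '' T z).Nonempty := ⟨h z, z.2 |> hself z |> fun hm => ⟨z, hm, rfl⟩⟩
    obtain ⟨r, ⟨y, hy, rfl⟩, hr⟩ := Real.lt_sInf_add_pos hne (by positivity : (0:ℝ) < (1/2)^n)
    exact ⟨⟨y, hy.1⟩, hy, hr.le⟩
  choose step hstep1 hstep2 using hstep
  set Z : ℕ → s := fun n => Nat.rec ⟨x₀, hx₀⟩ (fun n z => step n z) n with hZ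
  have hZsucc : ∀ n, Z (n+1) = step n (Z n) := fun n => rfl
  set z : ℕ → E := fun n => (Z n : E) with hz
  have hmemT : ∀ n, z (n+1) ∈ T (z n) := fun n => hstep1 n (Z n)
  have hmems : ∀ n, z n ∈ s := fun n => (Z n).2
  have key1 : ∀ n, h (z (n+1)) + ε * dist (z n) (z (n+1)) ≤ h (z n) := fun n => (hmemT n).2
  have hanti : Antitone fun n => h (z n) := by
    apply antitone_nat_of_succ_le
    intro n
    have := key1 n
    have : ε * dist (z n) (z (n+1)) ≥ 0 := by positivity
    linarith [key1 n]
  have hbdd : BddBelow (Set.range fun n => h (z n)) := by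
    refine ⟨0, ?_⟩; rintro r ⟨n, rfl⟩; exact hnn _ (hmems n)
  set c := ⨅ n, h (z n) with hc'
  have htend : Tendsto (fun n => h (z n)) atTop (𝓝 c) := tendsto_atTop_ciInf hanti hbdd
  have hcle : ∀ n, c ≤ h (z n) := fun n => ciInf_le hbdd n
  -- chain inequality
  have hchain : ∀ n m, n ≤ m → h (z m) + ε * dist (z n) (z m) ≤ h (z n) := by
    intro n m hnm
    induction m, hnm using Nat.le_induction with
    | base => simp
    | succ m hnm ih =>
      have h1 := key1 m
      have h2 : dist (z n) (z (m+1)) ≤ dist (z n) (z m) + dist (z m) (z (m+1)) :=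
        dist_triangle _ _ _
      nlinarith [h1, h2, ih]
  have hcauchy : CauchySeq z := by
    apply cauchySeq_of_le_tendsto_0 (fun n => (h (z n) - c) / ε)
    · intro n m N hn hm
      rcases le_total n m with hnm | hmn
      · have := hchain n m hnm
        have h1 : h (z n) ≤ h (z N) := hanti hn
        have h2 : c ≤ h (z m) := hcle m
        rw [le_div_iff₀ hε]
        nlinarith
      · have := hchain m n hmn
        have h1 : h (z m) ≤ h (z N) := hanti hm
        have h2 : c ≤ h (z n) := hcle n
        rw [dist_comm, le_div_iff₀ hε]
        nlinarith
    · have : Tendsto (fun n => h (z n) - c) atTop (𝓝 (c - c)) := htend.sub tendsto_const_nhds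
      simpa using this.div_const ε
  obtain ⟨xh, hxh⟩ := cauchySeq_tendsto_of_complete hcauchy
  have hxhs : xh ∈ s := hs.mem_of_tendsto hxh (Eventually.of_forall hmems)
  have hhx : Tendsto (fun n => h (z n)) atTop (𝓝 (h xh)) := by
    apply (hc xh hxhs).tendsto.comp
    rw [tendsto_nhdsWithin_iff]
    exact ⟨hxh, Eventually.of_forall hmems⟩
  have hceq : h xh = c := tendsto_nhds_unique hhx htend
  have hlim : ∀ n, h xh + ε * dist (z n) xh ≤ h (z n) := by
    intro n
    have : Tendsto (fun m => h (z m) + ε * dist (z n) (z m)) atTop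
        (𝓝 (h xh + ε * dist (z n) xh)) :=
      hhx.add ((tendsto_const_nhds.dist hxh).const_mul ε)
    refine le_of_tendsto this ?_
    filter_upwards [eventually_ge_atTop n] with m hm
    exact hchain n m hm
  refine ⟨xh, hxhs, hlim 0, ?_⟩
  intro y hy
  by_contra hlt
  push_neg at hlt
  have hyT : ∀ n, y ∈ T (z n) := by
    intro n
    refine ⟨hy, ?_⟩
    have h1 : dist (z n) y ≤ dist (z n) xh + dist xh y := dist_triangle _ _ _
    have := hlim n
    nlinarith
  have hle : ∀ n, h (z (n+1)) ≤ h y + (1/2)^n := by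
    intro n
    have h1 := hstep2 n (Z n)
    have h2 : h y ∈ h '' T (z n) := ⟨y, hyT n, rfl⟩
    have h3 : BddBelow (h '' T (z n)) := by
      refine ⟨0, ?_⟩; rintro r ⟨w, hw, rfl⟩; exact hnn _ hw.1
    have h4 : sInf (h '' T (z n)) ≤ h y := csInf_le h3 h2
    calc h (z (n+1)) ≤ sInf (h '' T (z n)) + (1/2)^n := hstep2 n (Z n)
    _ ≤ h y + (1/2)^n := by linarith
  have hcley : c ≤ h y := by
    have t1 : Tendsto (fun n => h (z (n+1))) atTop (𝓝 c) := htend.comp (tendsto_add_atTop_nat 1)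
    have t2 : Tendsto (fun n : ℕ => h y + (1/2:ℝ)^n) atTop (𝓝 (h y + 0)) :=
      tendsto_const_nhds.add (tendsto_pow_atTop_nhds_zero_of_lt_one (by norm_num) (by norm_num))
    have := le_of_tendsto_of_tendsto' t1 t2 hle
    simpa using this
  have h5 : 0 ≤ ε * dist xh y := by positivity
  linarith [hceq.le, hceq.ge]

theorem error_bound {l m q : ℕ}
    {X : Set (EuclideanSpace ℝ (Fin l))}
    {g : Fin m → EuclideanSpace ℝ (Fin l) → ℝ}
    {hf : Fin q → EuclideanSpace ℝ (Fin l) → ℝ}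
    {xbar : EuclideanSpace ℝ (Fin l)} {δ a : ℝ}
    (hδ : 0 < δ) (ha : 0 < a)
    (hball : ∀ y, ‖y - xbar‖ ≤ δ → y ∈ Gset X g)
    (hcont : ∀ y, ‖y - xbar‖ < δ → ContinuousAt (hsum hf) y)
    (hd : ∀ x, ‖x - xbar‖ ≤ δ → x ∉ Sset X g hf → dFun hf X g x ≤ ((-a : ℝ) : EReal))
    {x : EuclideanSpace ℝ (Fin l)}
    (hx1 : ‖x - xbar‖ ≤ δ/4) (hx2 : 4 * hsum hf x ≤ a * (δ/4)) :
    ∃ x', hsum hf x' = 0 ∧ a * dist x x' ≤ 4 * hsum hf x ∧ ‖x' - xbar‖ ≤ δ/2 := by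
  have hnonneg : ∀ y, 0 ≤ hsum hf y := fun y => Finset.sum_nonneg fun j _ => sq_nonneg _
  set s : Set (EuclideanSpace ℝ (Fin l)) := Metric.closedBall x (δ/2) with hsdef
  have hsub : ∀ y ∈ s, ‖y - xbar‖ ≤ 3*δ/4 := by
    intro y hy
    rw [Metric.mem_closedBall] at hy
    have h1 : ‖y - xbar‖ ≤ ‖y - x‖ + ‖x - xbar‖ := by
      have : y - xbar = (y - x) + (x - xbar) := by abel
      rw [this]; exact norm_add_le _ _
    rw [dist_eq_norm] at hy
    linarith
  have hconts : ContinuousOn (hsum hf) s := fun y hy =>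
    (hcont y (lt_of_le_of_lt (hsub y hy) (by linarith))).continuousWithinAt
  obtain ⟨xh, hxhs, hxh1, hxh2⟩ := my_ekeland (Metric.isClosed_closedBall) hconts
    (fun y _ => hnonneg y) (Metric.mem_closedBall_self (by linarith)) (show (0:ℝ) < a/4 by linarith)
  have hdx : a * dist x xh ≤ 4 * hsum hf x - 4 * hsum hf xh := by linarith
  have hdx4 : dist x xh ≤ δ/4 := by
    have h1 := hnonneg xh
    nlinarith
  have hxhxbar : ‖xh - xbar‖ ≤ δ/2 := by
    have h1 : ‖xh - xbar‖ ≤ ‖xh - x‖ + ‖x - xbar‖ := by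
      have : xh - xbar = (xh - x) + (x - xbar) := by abel
      rw [this]; exact norm_add_le _ _
    have h2 : ‖xh - x‖ = dist x xh := by rw [dist_eq_norm, norm_sub_rev]
    linarith
  have h0 : hsum hf xh = 0 := by
    by_contra hne
    have hpos : 0 < hsum hf xh := (hnonneg xh).lt_of_ne (Ne.symm hne)
    have hnotS : xh ∉ Sset X g hf := fun hS => hne hS.2
    have hdF := hd xh (by linarith) hnotS
    have hlt : dFun hf X g xh < ((-(a/2) : ℝ) : EReal) := by
      refine lt_of_le_of_lt hdF ?_
      exact_mod_cast (by linarith : -a < -(a/2))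
    rw [dFun, sInf_lt_iff] at hlt
    obtain ⟨r, ⟨u, hu, hunorm, hr⟩, hrlt⟩ := hlt
    rw [← hr, lowerHadamardDeriv] at hrlt
    have hfreq := Filter.frequently_lt_of_liminf_lt (by isBoundedDefault) hrlt
    have e12 : ∀ᶠ p : ℝ × EuclideanSpace ℝ (Fin l) in
        (nhdsWithin (0:ℝ) (Set.Ioi 0) ×ˢ nhds u),
        (p.1 ∈ Set.Ioi (0:ℝ) ∧ p.1 < δ/8) ∧ dist p.2 u < 1/2 := by
      have h1 : ∀ᶠ t : ℝ in nhdsWithin (0:ℝ) (Set.Ioi 0), t ∈ Set.Ioi (0:ℝ) ∧ t < δ/8 :=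
        Filter.Eventually.and
          (eventually_mem_nhdsWithin)
          (eventually_nhdsWithin_of_eventually_nhds
            (Filter.Tendsto.eventually_lt_const (by linarith) tendsto_id))
      have h2 : ∀ᶠ v : EuclideanSpace ℝ (Fin l) in nhds u, dist v u < 1/2 :=
        Metric.ball_mem_nhds u (by norm_num)
      exact Filter.Eventually.prod_mk h1 h2
    have e12' : ∀ᶠ p : ℝ × EuclideanSpace ℝ (Fin l) in
        ((nhdsWithin (0:ℝ) (Set.Ioi 0) ×ˢ nhds u) ⊓
          Filter.principal {p : ℝ × EuclideanSpace ℝ (Fin l) | xh + p.1 • p.2 ∈ X}),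
        (p.1 ∈ Set.Ioi (0:ℝ) ∧ p.1 < δ/8) ∧ dist p.2 u < 1/2 :=
      e12.filter_mono inf_le_left
    obtain ⟨⟨t, u'⟩, hq, ⟨ht0, htlt⟩, hudist⟩ := (hfreq.and_eventually e12').exists
    rw [Set.mem_Ioi] at ht0
    have hq' : (hsum hf (xh + t • u') - hsum hf xh) / t < -(a/2) := by
      exact_mod_cast hq
    set y := xh + t • u' with hy
    have hqy : hsum hf y - hsum hf xh < -(a/2) * t := by
      rw [div_lt_iff₀ ht0] at hq'
      linarith [hq']
    have hnu' : ‖u'‖ ≤ 3/2 := by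
      have h1 := norm_sub_norm_le u' u
      rw [dist_eq_norm] at hudist
      linarith [hudist, hunorm.le, hunorm.ge]
    have hdisty : dist xh y ≤ 3/2 * t := by
      have : dist xh y = t * ‖u'‖ := by
        rw [hy, dist_eq_norm]
        simp [norm_smul, abs_of_pos ht0]
      rw [this]
      nlinarith
    have hys : y ∈ s := by
      rw [hsdef, Metric.mem_closedBall]
      have h1 : dist y x ≤ dist y xh + dist xh x := dist_triangle _ _ _
      rw [dist_comm y xh, dist_comm xh x] at h1
      linarith
    have hek := hxh2 y hys
    nlinarith [hek, hqy, hdisty, ht0, ha, dist_nonneg (x := xh) (y := y)]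
  refine ⟨xh, h0, by linarith, hxhxbar⟩
theorem exact_penalty_isolated
    {l m q : ℕ}
    {X : Set (EuclideanSpace ℝ (Fin l))}
    {f : EuclideanSpace ℝ (Fin l) → ℝ}
    {g : Fin m → EuclideanSpace ℝ (Fin l) → ℝ}
    {hf : Fin q → EuclideanSpace ℝ (Fin l) → ℝ}
    {xbar : EuclideanSpace ℝ (Fin l)}
    {δ L a : ℝ}
    (hX : IsClosed X)
    (hfeas : xbar ∈ Sset X g hf)
    (hiso : ∃ A > (0 : ℝ), ∃ ε > (0 : ℝ), ∀ x ∈ Sset X g hf, ‖x - xbar‖ ≤ ε →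
      f xbar + A * ‖x - xbar‖ ≤ f x)
    (hδ : 0 < δ)
    (hLip : ∀ x ∈ {y | ‖y - xbar‖ ≤ δ} ∩ X, ∀ y ∈ {y | ‖y - xbar‖ ≤ δ} ∩ X,
      |f x - f y| ≤ L * ‖x - y‖)
    (hglsc : ∀ i, LowerSemicontinuous (g i))
    (hhdiff : ∀ j, ∀ x ∈ X, ∀ u, ∃ d : EReal, HasHadamardDerivAt (hf j) X x u d)
    (hhlsc : ∀ j, LowerSemicontinuous (hf j))
    (ha : 0 < a)
    (hd : ∀ x, ‖x - xbar‖ ≤ δ → x ∉ Sset X g hf → dFun hf X g x ≤ ((-a : ℝ) : EReal)) :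
    ∃ s : ℤ, ∀ γ : ℝ, (s : ℝ) < γ →
      ∃ A > (0 : ℝ), ∃ ε > (0 : ℝ), ∀ x ∈ Gset X g, ‖x - xbar‖ ≤ ε →
        Fpen f hf xbar γ xbar + A * ‖x - xbar‖ ≤ Fpen f hf xbar γ x := by

  classical
  obtain ⟨A, hA, εiso, hεiso, hiso'⟩ := hiso
  have hnonneg : ∀ y, 0 ≤ hsum hf y := fun y => Finset.sum_nonneg fun j _ => sq_nonneg _
  have hGclosed : IsClosed (Gset X g) := by
    have heq : Gset X g = X ∩ ⋂ i, (g i) ⁻¹' Set.Iic 0 := by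
      ext y
      simp [Gset, Set.mem_iInter, Set.mem_preimage, Set.mem_Iic]
    rw [heq]
    exact hX.inter (isClosed_iInter fun i => (hglsc i).isClosed_preimage 0)
  have hball : ∀ y, ‖y - xbar‖ ≤ δ → y ∈ Gset X g := by
    intro y hy
    by_cases hyS : y ∈ Sset X g hf
    · exact hyS.1
    · have h1 : dFun hf X g y < (⊤ : EReal) :=
        lt_of_le_of_lt (hd y hy hyS) (EReal.coe_lt_top _)
      rw [dFun, sInf_lt_iff] at h1
      obtain ⟨r, ⟨u, hu, -, -⟩, -⟩ := h1
      obtain ⟨t, v, htpos, ht0, hv, hmem⟩ := hu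
      have htend : Tendsto (fun k => y + t k • v k) atTop (𝓝 y) := by
        have h2 : Tendsto (fun k => t k • v k) atTop (𝓝 ((0:ℝ) • u)) := ht0.smul hv
        rw [zero_smul] at h2
        simpa using (tendsto_const_nhds (x := y)).add h2
      have h3 : y ∈ closure (Gset X g) :=
        mem_closure_of_tendsto htend (Eventually.of_forall hmem)
      rwa [hGclosed.closure_eq] at h3
  have hXball : ∀ y, ‖y - xbar‖ < δ → X ∈ 𝓝 y := by
    intro y hy
    refine Filter.mem_of_superset (Metric.isOpen_ball.mem_nhds
      (show y ∈ Metric.ball xbar δ by rwa [Metric.mem_ball, dist_eq_norm])) ?_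
    intro z hz
    rw [Metric.mem_ball, dist_eq_norm] at hz
    exact (hball z hz.le).1
  have hcont : ∀ y, ‖y - xbar‖ < δ → ContinuousAt (hsum hf) y := by
    intro y hy
    have hj : ∀ j, ContinuousAt (hf j) y := fun j =>
      hadamard_continuousAt (hXball y hy) (fun u => hhdiff j y (hball y hy.le).1 u)
    have : ContinuousAt (fun z => ∑ j : Fin q, (hf j z)^2) y :=
      tendsto_finset_sum _ fun j _ => ((hj j).pow 2)
    exact this
  have hhx0 : hsum hf xbar = 0 := hfeas.2
  set c := (a/4) * min (δ/4) (εiso/2) with hcdef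
  have hminpos : 0 < min (δ/4) (εiso/2) := lt_min (by linarith) (by linarith)
  have hcpos : 0 < c := mul_pos (by linarith) hminpos
  have hcontx : ContinuousAt (hsum hf) xbar := hcont xbar (by simpa using hδ)
  obtain ⟨ε₁, hε₁, hε₁'⟩ := Metric.continuousAt_iff.1 hcontx c hcpos
  set ε := min (ε₁/2) (min (δ/4) (εiso/2)) with hεdef
  have hεpos : 0 < ε := lt_min (by linarith) hminpos
  set L' := max L 0 with hL'def
  refine ⟨max ⌈(4*(L' + A))/a⌉ 0, ?_⟩
  intro γ hγ
  have hγ0 : (0:ℝ) ≤ γ := by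
    have h1 : ((0:ℤ):ℝ) ≤ ((max ⌈(4*(L' + A))/a⌉ 0 : ℤ) : ℝ) := by
      exact_mod_cast le_max_right _ _
    simpa using le_of_lt (lt_of_le_of_lt h1 hγ)
  have hγ' : 4*(L' + A) ≤ a * γ := by
    have h1 : (4*(L' + A))/a ≤ ((max ⌈(4*(L' + A))/a⌉ 0 : ℤ) : ℝ) := by
      refine le_trans (Int.le_ceil _) ?_
      exact_mod_cast le_max_left _ _
    have h2 : (4*(L' + A))/a ≤ γ := le_of_lt (lt_of_le_of_lt h1 hγ)
    rw [div_le_iff₀ ha] at h2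
    linarith
  refine ⟨A, hA, ε, hεpos, ?_⟩
  intro x hxG hxε
  have hFxbar : Fpen f hf xbar γ xbar = f xbar := by
    simp [Fpen, hhx0]
  rw [hFxbar, Fpen]
  have hsqnn : 0 ≤ (1/2 : ℝ) * ‖x - xbar‖^2 := by positivity
  have hεle : ε ≤ min (δ/4) (εiso/2) := min_le_right _ _
  have hεiso' : ε ≤ εiso/2 := le_trans hεle (min_le_right _ _)
  have hεδ : ε ≤ δ/4 := le_trans hεle (min_le_left _ _)
  rcases eq_or_lt_of_le (hnonneg x) with h0 | hpos
  · have hxS : x ∈ Sset X g hf := ⟨hxG, h0.symm⟩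
    have h1 := hiso' x hxS (le_trans hxε (by linarith))
    have h2 : γ * hsum hf x = 0 := by rw [← h0, mul_zero]
    linarith
  · have hxδ : ‖x - xbar‖ ≤ δ/4 := le_trans hxε hεδ
    have hxc : hsum hf x < c := by
      have hd1 : dist x xbar < ε₁ := by
        rw [dist_eq_norm]
        exact lt_of_le_of_lt (le_trans hxε (min_le_left _ _)) (by linarith)
      have := hε₁' hd1
      rw [Real.dist_eq, hhx0, sub_zero, abs_of_nonneg (hnonneg x)] at this
      exact this
  -- error bound
    have h4 : 4 * hsum hf x ≤ a * (δ/4) := by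
      have h5 : c ≤ (a/4) * (δ/4) :=
        mul_le_mul_of_nonneg_left (min_le_left _ _) (by linarith)
      nlinarith
    obtain ⟨x', hx'0, hx'dist, hx'ball⟩ := error_bound hδ ha hball hcont hd hxδ h4
    have hdxx' : dist x x' ≤ min (δ/4) (εiso/2) := by
      have h5 : 4 * hsum hf x ≤ a * min (δ/4) (εiso/2) := by nlinarith
      nlinarith [dist_nonneg (x := x) (y := x')]
    have hnormxx' : ‖x - x'‖ = dist x x' := (dist_eq_norm x x').symm
    have hx'iso : ‖x' - xbar‖ ≤ εiso := by
      have h5 : ‖x' - xbar‖ ≤ ‖x' - x‖ + ‖x - xbar‖ := by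
        have heq : x' - xbar = (x' - x) + (x - xbar) := by abel
        rw [heq]; exact norm_add_le _ _
      have h6 : ‖x' - x‖ = dist x x' := by rw [dist_eq_norm, norm_sub_rev]
      have h7 := le_trans hdxx' (min_le_right (δ/4) (εiso/2))
      linarith [le_trans hxε hεiso']
    have hx'S : x' ∈ Sset X g hf := ⟨hball x' (by linarith), hx'0⟩
    have hisox' := hiso' x' hx'S hx'iso
    have hxX : x ∈ {y | ‖y - xbar‖ ≤ δ} ∩ X := ⟨by simp only [Set.mem_setOf_eq]; linarith, hxG.1⟩
    have hx'X : x' ∈ {y | ‖y - xbar‖ ≤ δ} ∩ X :=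
      ⟨by simp only [Set.mem_setOf_eq]; linarith, hx'S.1.1⟩
    have hlip := hLip x' hx'X x hxX
    have habs : f x' - f x ≤ L' * dist x x' := by
      have h5 : f x' - f x ≤ |f x' - f x| := le_abs_self _
      have h6 : L * ‖x' - x‖ ≤ L' * ‖x' - x‖ :=
        mul_le_mul_of_nonneg_right (le_max_left _ _) (norm_nonneg _)
      have h7 : ‖x' - x‖ = dist x x' := by rw [dist_eq_norm, norm_sub_rev]
      rw [h7] at hlip h6
      linarith [hlip]
    have htri : ‖x - xbar‖ ≤ ‖x' - xbar‖ + dist x x' := by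
      have heq : x - xbar = (x - x') + (x' - xbar) := by abel
      have := norm_add_le (x - x') (x' - xbar)
      rw [← heq] at this
      linarith [hnormxx'.ge, hnormxx'.le]
    have key : (L' + A) * dist x x' ≤ γ * hsum hf x := by
      have h5 : 0 ≤ L' + A := by
        have : (0:ℝ) ≤ L' := le_max_right _ _
        linarith
      have h6 := mul_le_mul_of_nonneg_left hx'dist h5
      have h7 := mul_le_mul_of_nonneg_right hγ' (hnonneg x)
      have h8 : a * ((L' + A) * dist x x') ≤ a * (γ * hsum hf x) := by linarith [h6, h7]
      exact le_of_mul_le_mul_left h8 ha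
    have hAtri := mul_le_mul_of_nonneg_left htri hA.le
    linarith
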